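/- Suppose (1−hn)d ≠ 0, let W be the n×n matrix with diagonal entries −(n−2+h)/((1−hn)d) and off-diagonal entries (1−h)/((1−hn)d), and let δ be a real number. Let r ∈ ℝⁿ be the row vector with r₁ = hd, r₂ = ρd − δ, and r_j = ρd for all j ≥ 3. Then the product rW has first entry 1 − (1−h)δ/((1−hn)d), second entry (n−2+h)δ/((1−hn)d), and all remaining entries equal to −(1−h)δ/((1−hn)d). (rW is the prediction of the trained GCN layer AXW, without self-loops, on a node whose neighborhood has δ fewer class-2 neighbors than expected.) -/

import Mathlib

/-- Prediction of the trained GCN layer `AXW` (no self-loops) on a node whose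
neighborhood has `δ` fewer class-2 neighbors than expected: with
`r = (hd, ρd-δ, ρd, …, ρd)` and `W` the optimal weight matrix, `rW` has first entry
`1 - (1-h)δ/((1-hn)d)`, second entry `(n-2+h)δ/((1-hn)d)`, and all remaining entries
`-(1-h)δ/((1-hn)d)`. -/
theorem h2gcn_gcn_noselfloop_perturbed_prediction
    (n : ℕ) (hn : 2 ≤ n) (d h : ℝ) (hd : 0 < d)
    (ρ : ℝ) (hρ : ρ = (1 - h) / ((n : ℝ) - 1))
    (hD : (1 - h * (n : ℝ)) * d ≠ 0)
    (W : Matrix (Fin n) (Fin n) ℝ)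
    (hW : ∀ i j, W i j =
      if i = j then -(((n : ℝ) - 2 + h)) / ((1 - h * (n : ℝ)) * d)
      else (1 - h) / ((1 - h * (n : ℝ)) * d))
    (δ : ℝ) (r : Fin n → ℝ)
    (hr : ∀ j : Fin n, r j =
      if (j : ℕ) = 0 then h * d
      else if (j : ℕ) = 1 then ρ * d - δ
      else ρ * d) :
    ∀ j : Fin n, Matrix.vecMul r W j =
      if (j : ℕ) = 0 then 1 - (1 - h) * δ / ((1 - h * (n : ℝ)) * d)
      else if (j : ℕ) = 1 then ((n : ℝ) - 2 + h) * δ / ((1 - h * (n : ℝ)) * d)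
      else -((1 - h) * δ) / ((1 - h * (n : ℝ)) * d) := by
  have hn1 : ((n : ℝ) - 1) ≠ 0 := by
    have : (2 : ℝ) ≤ (n : ℝ) := by exact_mod_cast hn
    linarith
  set D : ℝ := (1 - h * (n : ℝ)) * d with hDdef
  set c : ℝ := (1 - h) / D with hc
  set m : ℝ := -(((n : ℝ) - 2 + h)) / D with hm
  -- the two special indices
  have h0 : (0 : ℕ) < n := by omega
  have h1 : (1 : ℕ) < n := by omega
  set i0 : Fin n := ⟨0, h0⟩
  set i1 : Fin n := ⟨1, h1⟩
  have hi01 : i0 ≠ i1 := by simp [i0, i1, Fin.ext_iff]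
  -- sum of r
  have hsum : ∑ i : Fin n, r i = d - δ := by
    have hr' : ∀ i : Fin n, r i =
        ρ * d + (if i = i0 then h * d - ρ * d else 0) + (if i = i1 then -δ else 0) := by
      intro i
      rw [hr i]
      rcases eq_or_ne i i0 with h' | h'
      · subst h'; simp [i0, i1, hi01]
      · rcases eq_or_ne i i1 with h'' | h''
        · subst h''; simp [i0, i1] at h' ⊢
          ring
        · have e0 : ¬ ((i : ℕ) = 0) := fun hh => h' (Fin.ext hh)
          have e1 : ¬ ((i : ℕ) = 1) := fun hh => h'' (Fin.ext hh)
          simp [e0, e1, h', h'']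
    rw [Finset.sum_congr rfl (fun i _ => hr' i)]
    rw [Finset.sum_add_distrib, Finset.sum_add_distrib]
    rw [Finset.sum_ite_eq' Finset.univ i0, Finset.sum_ite_eq' Finset.univ i1]
    simp only [Finset.mem_univ, if_true, Finset.sum_const, Finset.card_univ,
      Fintype.card_fin, nsmul_eq_mul]
    have hρn : ((n : ℝ) - 1) * ρ = 1 - h := by
      rw [hρ]; field_simp
    have : (n : ℝ) * (ρ * d) = (((n:ℝ) - 1) * ρ) * d + ρ * d := by ring
    rw [this, hρn]; ring
  intro j
  have key : Matrix.vecMul r W j = (∑ i : Fin n, r i) * c + r j * (m - c) := by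
    rw [Matrix.vecMul, dotProduct]
    have : ∀ i : Fin n, r i * W i j =
        r i * c + (if i = j then r j * (m - c) else 0) := by
      intro i
      rw [hW i j]
      rcases eq_or_ne i j with h' | h'
      · subst h'; simp [hm, hc]; ring
      · simp [h', hc]
    rw [Finset.sum_congr rfl (fun i _ => this i), Finset.sum_add_distrib,
      Finset.sum_ite_eq' Finset.univ j]
    simp [Finset.sum_mul]
  rw [key, hsum]
  rw [hr j]
  have hmc : m - c = -((n : ℝ) - 1) / D := by
    rw [hm, hc, div_sub_div_same]; ring_nf
  rw [hmc, hc]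
  have hρn : ρ = (1 - h) / ((n : ℝ) - 1) := hρ
  rcases eq_or_ne (j : ℕ) 0 with hj0 | hj0
  · simp only [hj0, if_pos rfl, ↓reduceIte]
    rw [hDdef]
    have h1n : (1 - h * (n : ℝ)) ≠ 0 := left_ne_zero_of_mul hD
    field_simp
    ring
  · rcases eq_or_ne (j : ℕ) 1 with hj1 | hj1
    · simp only [hj0, hj1]
      norm_num
      rw [hρ, hDdef]
      field_simp
      ring
    · rw [if_neg hj0, if_neg hj1, if_neg hj0, if_neg hj1, hρ, hDdef]
      field_simp
      ring
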